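/- Let (k_1,…,k_n) be an index of positive integers and let z ∈ ℂ with |z| < 1. Then Li_{k_1,…,k_n} is complex-differentiable at z, and: if k_1 ≥ 2 and z ≠ 0 then d/dz Li_{k_1,…,k_n}(z) = (1/z)·Li_{k_1−1,k_2,…,k_n}(z), while if k_1 = 1 then d/dz Li_{k_1,…,k_n}(z) = (1/(1−z))·Li_{k_2,…,k_n}(z). -/

import Mathlib

/-- Strictly decreasing tuples `m 0 > m 1 > ⋯ > m (N-1) ≥ 1` of positive integers,
padded by `0` from position `N` on. -/
def DecTuple (N : ℕ) : Set (ℕ → ℕ) :=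
  {m | (∀ j, j + 1 < N → m (j + 1) < m j) ∧ (∀ j, j < N → 1 ≤ m j) ∧ ∀ j, N ≤ j → m j = 0}

/-- The multiple polylogarithm `Li_{k₁,…,kₙ}(z) = Σ_{m₁>⋯>mₙ≥1} z^{m₁}/(m₁^{k₁}⋯mₙ^{kₙ})`,
with `Li_∅(z) = 1`. -/
noncomputable def mpl (k : List ℕ) (z : ℂ) : ℂ :=
  ∑' m : DecTuple k.length,
    z ^ m.1 0 * ∏ i ∈ Finset.range k.length, ((m.1 i : ℂ) ^ k.getD i 0)⁻¹

/-- The slice of `DecTuple N` where the first entry equals `n`. -/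
def Slice (N n : ℕ) : Set (ℕ → ℕ) := {m | m ∈ DecTuple N ∧ m 0 = n}

/-- Coefficients of the power series of `mpl k`. -/
noncomputable def bcoef : List ℕ → ℕ → ℝ
  | [], n => if n = 0 then 1 else 0
  | (k0 :: ks), n => if n = 0 then 0 else ((n : ℝ) ^ k0)⁻¹ * ∑ j ∈ Finset.range n, bcoef ks j

lemma bcoef_nonneg (k : List ℕ) (n : ℕ) : 0 ≤ bcoef k n := by
  induction k generalizing n with
  | nil => unfold bcoef; positivity
  | cons k0 ks ih =>
    unfold bcoef
    split
    · exact le_refl 0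
    · exact mul_nonneg (by positivity) (Finset.sum_nonneg fun j _ => ih j)

lemma bcoef_le_one (k : List ℕ) (hk : ∀ x ∈ k, 1 ≤ x) (n : ℕ) : bcoef k n ≤ 1 := by
  induction k generalizing n with
  | nil => unfold bcoef; split <;> norm_num
  | cons k0 ks ih =>
    unfold bcoef
    split
    · norm_num
    · rename_i hn
      have hn1 : 1 ≤ n := Nat.one_le_iff_ne_zero.2 hn
      have h1 : ∑ j ∈ Finset.range n, bcoef ks j ≤ n := by
        calc ∑ j ∈ Finset.range n, bcoef ks j ≤ ∑ j ∈ Finset.range n, 1 :=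
              Finset.sum_le_sum fun j _ => ih (fun x hx => hk x (List.mem_cons_of_mem _ hx)) j
          _ = n := by simp
      have hk0 : 1 ≤ k0 := hk k0 List.mem_cons_self
      have h2 : ((n : ℝ) ^ k0)⁻¹ ≤ (n : ℝ)⁻¹ := by
        apply inv_anti₀ (by positivity)
        calc (n : ℝ) = (n : ℝ) ^ 1 := (pow_one _).symm
          _ ≤ (n : ℝ) ^ k0 := pow_le_pow_right₀ (by exact_mod_cast hn1) hk0
      calc ((n : ℝ) ^ k0)⁻¹ * ∑ j ∈ Finset.range n, bcoef ks j
          ≤ (n : ℝ)⁻¹ * n := by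
            apply mul_le_mul h2 h1 (Finset.sum_nonneg fun j _ => bcoef_nonneg ks j) (by positivity)
        _ = 1 := by
            rw [inv_mul_cancel₀]
            exact_mod_cast hn

/-- `Slice 0 0` is the singleton of the zero function. -/
lemma slice_zero_zero : Slice 0 0 = {fun _ => 0} := by
  ext m
  constructor
  · rintro ⟨⟨-, -, h3⟩, -⟩
    funext j
    exact h3 j (Nat.zero_le j)
  · rintro rfl
    exact ⟨⟨fun j hj => absurd hj (by omega), fun j hj => absurd hj (by omega),
      fun j _ => rfl⟩, rfl⟩

lemma slice_zero_empty (n : ℕ) (hn : 1 ≤ n) : IsEmpty (Slice 0 n) := by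
  constructor
  rintro ⟨m, ⟨-, -, h3⟩, h0⟩
  have := h3 0 (Nat.zero_le 0)
  omega

lemma slice_succ_zero_empty (N : ℕ) : IsEmpty (Slice (N + 1) 0) := by
  constructor
  rintro ⟨m, ⟨-, h2, -⟩, h0⟩
  have := h2 0 (Nat.succ_pos N)
  omega

/-- Prepend a value to a tuple. -/
def consT (n : ℕ) (m : ℕ → ℕ) : ℕ → ℕ := fun i => if i = 0 then n else m (i - 1)

/-- Drop the first value of a tuple. -/
def tailT (m : ℕ → ℕ) : ℕ → ℕ := fun i => m (i + 1)

lemma consT_mem {N n j : ℕ} {m : ℕ → ℕ} (hn : 1 ≤ n) (hj : j < n) (hm : m ∈ Slice N j) :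
    consT n m ∈ Slice (N + 1) n := by
  obtain ⟨⟨g1, g2, g3⟩, g0⟩ := hm
  refine ⟨⟨?_, ?_, ?_⟩, if_pos rfl⟩
  · intro i hi
    rcases Nat.eq_zero_or_pos i with rfl | hipos
    · show consT n m 1 < consT n m 0
      unfold consT
      rw [if_neg one_ne_zero, if_pos rfl]
      rcases Nat.eq_zero_or_pos N with rfl | hN
      · rw [g3 0 le_rfl] at g0; omega
      · rw [show (1:ℕ) - 1 = 0 from rfl, g0]; exact hj
    · unfold consT
      rw [if_neg (by omega), if_neg (by omega)]
      have := g1 (i - 1) (by omega)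
      rwa [show i - 1 + 1 = i by omega] at this
  · intro i hi
    unfold consT
    rcases Nat.eq_zero_or_pos i with rfl | hipos
    · rwa [if_pos rfl]
    · rw [if_neg (by omega)]
      exact g2 (i - 1) (by omega)
  · intro i hi
    unfold consT
    rw [if_neg (by omega)]
    exact g3 (i - 1) (by omega)

lemma tailT_mem {N n : ℕ} {m : ℕ → ℕ} (hm : m ∈ Slice (N + 1) n) :
    tailT m ∈ Slice N (m 1) := by
  obtain ⟨⟨g1, g2, g3⟩, g0⟩ := hm
  exact ⟨⟨fun i hi => g1 (i + 1) (by omega), fun i hi => g2 (i + 1) (by omega),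
    fun i hi => g3 (i + 1) (by omega)⟩, rfl⟩

lemma snd_lt {N n : ℕ} {m : ℕ → ℕ} (hn : 1 ≤ n) (hm : m ∈ Slice (N + 1) n) : m 1 < n := by
  obtain ⟨⟨g1, g2, g3⟩, g0⟩ := hm
  rcases Nat.eq_zero_or_pos N with rfl | hN
  · rw [g3 1 le_rfl]; omega
  · have h : m (0 + 1) < m 0 := g1 0 (by omega)
    rw [zero_add] at h
    omega

/-- Union of slices with first entry `< n`. -/
def TSet (N n : ℕ) : Set (ℕ → ℕ) := ⋃ j ∈ Finset.range n, Slice N j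

/-- The recursive structure of slices. -/
def sliceEquiv (N n : ℕ) (hn : 1 ≤ n) : TSet N n ≃ Slice (N + 1) n where
  toFun p := ⟨consT n p.1, by
    obtain ⟨m, hm⟩ := p
    simp only [TSet, Set.mem_iUnion, Finset.mem_range] at hm
    obtain ⟨j, hj, hmj⟩ := hm
    exact consT_mem hn (show m 0 < n by rw [hmj.2]; exact hj) ⟨hmj.1, rfl⟩⟩
  invFun m := ⟨tailT m.1, by
    simp only [TSet, Set.mem_iUnion, Finset.mem_range]
    exact ⟨m.1 1, snd_lt hn m.2, tailT_mem m.2⟩⟩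
  left_inv p := by
    apply Subtype.ext
    funext i
    simp only [consT, tailT, if_neg (Nat.succ_ne_zero i), Nat.add_sub_cancel]
  right_inv m := by
    apply Subtype.ext
    funext i
    rcases Nat.eq_zero_or_pos i with rfl | hipos
    · simp only [consT, if_pos rfl]
      exact m.2.2.symm
    · simp only [consT, tailT, if_neg (by omega : ¬ i = 0)]
      rw [show i - 1 + 1 = i by omega]

/-- The product appearing in the multiple polylogarithm, as a real-valued function. -/
noncomputable def gprod (k : List ℕ) (m : ℕ → ℕ) : ℝ :=
  ∏ i ∈ Finset.range k.length, ((m i : ℝ) ^ k.getD i 0)⁻¹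

lemma gprod_nonneg (k : List ℕ) (m : ℕ → ℕ) : 0 ≤ gprod k m :=
  Finset.prod_nonneg fun i _ => by positivity

lemma hasSum_slice (k : List ℕ) (n : ℕ) :
    HasSum (fun m : Slice k.length n => gprod k m.1) (bcoef k n) := by
  induction k generalizing n with
  | nil =>
    rcases Nat.eq_zero_or_pos n with rfl | hn
    · rw [show bcoef [] 0 = 1 by simp [bcoef]]
      simp only [List.length_nil]
      rw [slice_zero_zero]
      have h := hasSum_singleton (fun _ => 0 : ℕ → ℕ) (gprod [])
      have hg : gprod [] (fun _ => 0) = 1 := by simp [gprod]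
      rw [hg] at h
      exact h
    · haveI : IsEmpty (Slice (List.length ([] : List ℕ)) n) := by
        simpa using slice_zero_empty n hn
      rw [show bcoef [] n = 0 by simp [bcoef]; omega]
      exact hasSum_empty
  | cons k0 ks ih =>
    rcases Nat.eq_zero_or_pos n with rfl | hn
    · haveI : IsEmpty (Slice (List.length (k0 :: ks)) 0) := by
        simpa using slice_succ_zero_empty ks.length
      rw [show bcoef (k0 :: ks) 0 = 0 by simp [bcoef]]
      exact hasSum_empty
    · have hdisj : ((Finset.range n : Finset ℕ) : Set ℕ).Pairwise
          (Function.onFun Disjoint (Slice ks.length)) := by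
        intro a _ b _ hab
        simp only [Function.onFun, Set.disjoint_left]
        rintro m ⟨-, h0a⟩ ⟨-, h0b⟩
        exact hab (h0a ▸ h0b ▸ rfl)
      have hU : HasSum ((gprod ks) ∘ (Subtype.val) : TSet ks.length n → ℝ)
          (∑ j ∈ Finset.range n, bcoef ks j) :=
        hasSum_sum_disjoint _ hdisj fun j _ => ih j
      set e := sliceEquiv ks.length n hn with he
      have hE : HasSum (((gprod ks) ∘ (Subtype.val)) ∘ e.symm : Slice (ks.length + 1) n → ℝ)
          (∑ j ∈ Finset.range n, bcoef ks j) := (Equiv.hasSum_iff e.symm).2 hU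
      have hmul := hE.mul_left (((n : ℝ) ^ k0)⁻¹)
      rw [show bcoef (k0 :: ks) n = ((n:ℝ)^k0)⁻¹ * ∑ j ∈ Finset.range n, bcoef ks j by
        simp only [bcoef]; rw [if_neg (by omega)]]
      have hfe : (fun m : Slice (ks.length + 1) n => gprod (k0 :: ks) m.1) =
          fun m : Slice (ks.length + 1) n =>
            ((n:ℝ)^k0)⁻¹ * (((gprod ks) ∘ (Subtype.val)) ∘ e.symm) m := by
        funext m
        simp only [Function.comp_apply, he, sliceEquiv, Equiv.coe_fn_symm_mk]
        show ∏ i ∈ Finset.range (ks.length + 1), ((m.1 i : ℝ) ^ (k0 :: ks).getD i 0)⁻¹ = _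
        rw [Finset.prod_range_succ']
        have h0 : m.1 0 = n := m.2.2
        rw [show ((k0 :: ks).getD 0 0) = k0 from rfl, h0, mul_comm]
        congr 1
      show HasSum (fun m : Slice (ks.length + 1) n => gprod (k0 :: ks) m.1) _
      rw [hfe]
      exact hmul

/-- Decomposition of `DecTuple N` into the slices. -/
def decEquiv (N : ℕ) : (Σ n : ℕ, Slice N n) ≃ DecTuple N where
  toFun p := ⟨p.2.1, p.2.2.1⟩
  invFun m := ⟨m.1 0, m.1, m.2, rfl⟩
  left_inv p := by
    rcases p with ⟨n, m, hm, h0⟩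
    subst h0
    rfl
  right_inv m := Subtype.ext rfl

lemma norm_summand (k : List ℕ) (z : ℂ) (m : ℕ → ℕ) :
    ‖z ^ m 0 * ∏ i ∈ Finset.range k.length, ((m i : ℂ) ^ k.getD i 0)⁻¹‖
      = ‖z‖ ^ m 0 * gprod k m := by
  rw [norm_mul, norm_pow]
  congr 1
  rw [norm_prod]
  unfold gprod
  apply Finset.prod_congr rfl
  intro i _
  rw [norm_inv, norm_pow]
  norm_num

lemma summand_eq (k : List ℕ) (z : ℂ) (m : ℕ → ℕ) :
    z ^ m 0 * ∏ i ∈ Finset.range k.length, ((m i : ℂ) ^ k.getD i 0)⁻¹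
      = z ^ m 0 * (gprod k m : ℝ) := by
  congr 1
  unfold gprod
  push_cast
  rfl

lemma summable_bz (k : List ℕ) (hk : ∀ x ∈ k, 1 ≤ x) {r : ℝ} (hr0 : 0 ≤ r) (hr : r < 1) :
    Summable (fun n : ℕ => r ^ n * bcoef k n) := by
  apply Summable.of_nonneg_of_le
    (fun n => mul_nonneg (by positivity) (bcoef_nonneg k n))
    (fun n => ?_) (summable_geometric_of_lt_one hr0 hr)
  calc r ^ n * bcoef k n ≤ r ^ n * 1 :=
        mul_le_mul_of_nonneg_left (bcoef_le_one k hk n) (by positivity)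
    _ = r ^ n := mul_one _

lemma hasSum_mpl (k : List ℕ) (hk : ∀ x ∈ k, 1 ≤ x) (z : ℂ) (hz : ‖z‖ < 1) :
    HasSum (fun m : DecTuple k.length =>
        z ^ m.1 0 * ∏ i ∈ Finset.range k.length, ((m.1 i : ℂ) ^ k.getD i 0)⁻¹)
      (∑' n : ℕ, (bcoef k n : ℂ) * z ^ n) := by
  set N := k.length
  set F : (ℕ → ℕ) → ℂ := fun m =>
    z ^ m 0 * ∏ i ∈ Finset.range N, ((m i : ℂ) ^ k.getD i 0)⁻¹ with hF
  -- fiberwise sums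
  have hfib : ∀ n : ℕ, HasSum (fun m : Slice N n => F m.1) ((bcoef k n : ℂ) * z ^ n) := by
    intro n
    have h1 : HasSum (fun m : Slice N n => ((gprod k m.1 : ℝ) : ℂ)) ((bcoef k n : ℝ) : ℂ) :=
      Complex.hasSum_ofReal.2 (hasSum_slice k n)
    have h2 := h1.mul_left (z ^ n)
    have : (fun m : Slice N n => z ^ n * ((gprod k m.1 : ℝ) : ℂ))
        = fun m : Slice N n => F m.1 := by
      funext m
      rw [hF]
      dsimp only
      rw [summand_eq k z m.1, m.2.2]
    rw [this] at h2
    rw [mul_comm]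
    exact h2
  -- summability of norms over the sigma type
  have hnorm : Summable (fun p : Σ n : ℕ, Slice N n => ‖F p.2.1‖) := by
    apply (summable_sigma_of_nonneg (fun p => norm_nonneg _)).2
    constructor
    · intro n
      apply Summable.of_nonneg_of_le (fun m => norm_nonneg _) (fun m => le_of_eq ?_)
        (((hasSum_slice k n).mul_left (‖z‖ ^ n)).summable)
      rw [norm_summand k z, m.2.2]
    · apply Summable.of_nonneg_of_le (fun n => tsum_nonneg fun m => norm_nonneg _)
        (fun n => ?_) (summable_bz k hk (norm_nonneg z) hz)
      have hts : ∑' m : Slice N n, ‖F m.1‖ = ‖z‖ ^ n * bcoef k n := by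
        have : (fun m : Slice N n => ‖F m.1‖) = fun m : Slice N n => ‖z‖ ^ n * gprod k m.1 := by
          funext m
          rw [norm_summand k z, m.2.2]
        rw [this]
        exact ((hasSum_slice k n).mul_left (‖z‖ ^ n)).tsum_eq
      rw [hts]
  have hsummable : Summable (fun p : Σ n : ℕ, Slice N n => F p.2.1) :=
    Summable.of_norm hnorm
  have hsigma : HasSum (fun n : ℕ => (bcoef k n : ℂ) * z ^ n)
      (∑' p : Σ n : ℕ, Slice N n, F p.2.1) :=
    HasSum.sigma hsummable.hasSum fun n => hfib n
  have := hsummable.hasSum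
  rw [← hsigma.tsum_eq] at this
  exact (Equiv.hasSum_iff (decEquiv N)).1 this

lemma summable_u {r : ℝ} (hr0 : 0 ≤ r) (hr : r < 1) :
    Summable (fun n : ℕ => (n : ℝ) * r ^ (n - 1)) := by
  rw [← summable_nat_add_iff 1]
  have h1 : Summable (fun n : ℕ => (n : ℝ) * r ^ n + r ^ n) := by
    apply Summable.add
    · simpa using summable_pow_mul_geometric_of_norm_lt_one 1
        (by rwa [Real.norm_eq_abs, abs_of_nonneg hr0])
    · exact summable_geometric_of_lt_one hr0 hr
  apply h1.congr
  intro n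
  rw [Nat.add_sub_cancel]
  push_cast
  ring

lemma bcoef_mul_nat (k0 : ℕ) (hk0 : 1 ≤ k0) (ks : List ℕ) (n : ℕ) :
    (n : ℝ) * bcoef (k0 :: ks) n = bcoef ((k0 - 1) :: ks) n := by
  rcases Nat.eq_zero_or_pos n with rfl | hn
  · simp [bcoef]
  · have hne : (n : ℝ) ≠ 0 := by positivity
    show (n : ℝ) * (if n = 0 then 0 else ((n : ℝ) ^ k0)⁻¹ * ∑ j ∈ Finset.range n, bcoef ks j)
      = if n = 0 then 0 else ((n : ℝ) ^ (k0 - 1))⁻¹ * ∑ j ∈ Finset.range n, bcoef ks j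
    rw [if_neg (by omega), if_neg (by omega)]
    have hpow : (n : ℝ) ^ k0 = (n : ℝ) ^ (k0 - 1) * n := by
      rw [← pow_succ]
      congr 1
      omega
    rw [hpow, mul_inv]
    field_simp

lemma mpl_eq (k : List ℕ) (hk : ∀ x ∈ k, 1 ≤ x) (z : ℂ) (hz : ‖z‖ < 1) :
    mpl k z = ∑' n : ℕ, (bcoef k n : ℂ) * z ^ n :=
  (hasSum_mpl k hk z hz).tsum_eq

lemma summable_b_complex (k : List ℕ) (hk : ∀ x ∈ k, 1 ≤ x) (z : ℂ) (hz : ‖z‖ < 1) :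
    Summable (fun n : ℕ => (bcoef k n : ℂ) * z ^ n) := by
  apply Summable.of_norm
  apply ((summable_bz k hk (norm_nonneg z) hz).mul_left 1).of_nonneg_of_le
    (fun n => norm_nonneg _)
  intro n
  rw [norm_mul, norm_pow, Complex.norm_real, Real.norm_eq_abs,
    abs_of_nonneg (bcoef_nonneg k n), one_mul]
  exact le_of_eq (mul_comm _ _)

lemma bcoef_zero_cons (ks : List ℕ) (n : ℕ) :
    bcoef (0 :: ks) (n + 1) = ∑ j ∈ Finset.range (n + 1), bcoef ks j := by
  show (if n + 1 = 0 then (0:ℝ) else (((n+1 : ℕ) : ℝ) ^ 0)⁻¹ * ∑ j ∈ Finset.range (n+1), bcoef ks j) = _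
  rw [if_neg (Nat.succ_ne_zero n), pow_zero, inv_one, one_mul]

lemma bcoef_zero_cons_le (ks : List ℕ) (hks : ∀ x ∈ ks, 1 ≤ x) (n : ℕ) :
    bcoef (0 :: ks) n ≤ n := by
  rcases Nat.eq_zero_or_pos n with rfl | hn
  · simp [bcoef]
  · obtain ⟨m, rfl⟩ := Nat.exists_eq_succ_of_ne_zero (by omega : n ≠ 0)
    rw [bcoef_zero_cons]
    calc ∑ j ∈ Finset.range (m+1), bcoef ks j ≤ ∑ j ∈ Finset.range (m+1), 1 :=
          Finset.sum_le_sum fun j _ => bcoef_le_one ks hks j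
      _ = ((m+1 : ℕ) : ℝ) := by simp

/-- **Differential relations for multiple polylogarithms.**  For `|z| < 1` the function
`Li_{k₁,…,kₙ}` is complex-differentiable at `z`, with
`(d/dz) Li_{k₁,…,kₙ}(z) = z⁻¹ · Li_{k₁-1,k₂,…,kₙ}(z)` if `k₁ ≥ 2` (and `z ≠ 0`), and
`(d/dz) Li_{k₁,…,kₙ}(z) = (1-z)⁻¹ · Li_{k₂,…,kₙ}(z)` if `k₁ = 1`. -/
theorem mpl_hasDeriv (k0 : ℕ) (ks : List ℕ) (hk0 : 1 ≤ k0) (hks : ∀ x ∈ ks, 1 ≤ x)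
    (z : ℂ) (hz : ‖z‖ < 1) :
    DifferentiableAt ℂ (mpl (k0 :: ks)) z ∧
    (2 ≤ k0 → z ≠ 0 → deriv (mpl (k0 :: ks)) z = z⁻¹ * mpl ((k0 - 1) :: ks) z) ∧
    (k0 = 1 → deriv (mpl (k0 :: ks)) z = (1 - z)⁻¹ * mpl ks z) := by
  have hkk : ∀ x ∈ (k0 :: ks), 1 ≤ x := by
    intro x hx
    rcases List.mem_cons.1 hx with rfl | hx
    · exact hk0
    · exact hks x hx
  set r : ℝ := (‖z‖ + 1) / 2 with hr
  have hr0 : 0 ≤ r := by positivity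
  have hzr : ‖z‖ < r := by rw [hr]; linarith
  have hr1 : r < 1 := by rw [hr]; linarith
  set c : ℕ → ℂ := fun n => ((bcoef (k0 :: ks) n : ℝ) : ℂ) with hc
  set D : ℂ := ∑' n : ℕ, c n * ((n : ℂ) * z ^ (n - 1)) with hD
  have hderiv : HasDerivAt (fun y => ∑' n : ℕ, c n * y ^ n) D z := by
    apply hasDerivAt_tsum_of_isPreconnected
      (u := fun n : ℕ => (n : ℝ) * r ^ (n - 1))
      (g' := fun (n : ℕ) (y : ℂ) => c n * ((n : ℂ) * y ^ (n - 1)))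
      (summable_u hr0 hr1) Metric.isOpen_ball (convex_ball (0:ℂ) r).isPreconnected
      (fun n y _ => (hasDerivAt_pow n y).const_mul (c n))
      (fun n y hy => ?_) (mem_ball_zero_iff.2 hzr)
      (summable_b_complex (k0 :: ks) hkk z hz) (mem_ball_zero_iff.2 hzr)
    have hy' : ‖y‖ ≤ r := le_of_lt (mem_ball_zero_iff.1 hy)
    rw [norm_mul, norm_mul, norm_pow, Complex.norm_natCast]
    have h1 : ‖c n‖ ≤ 1 := by
      rw [hc]
      dsimp only
      rw [Complex.norm_real, Real.norm_eq_abs, abs_of_nonneg (bcoef_nonneg _ n)]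
      exact bcoef_le_one _ hkk n
    calc ‖c n‖ * ((n:ℝ) * ‖y‖ ^ (n-1)) ≤ 1 * ((n:ℝ) * r ^ (n-1)) := by
          apply mul_le_mul h1 ?_ (by positivity) one_pos.le
          exact mul_le_mul_of_nonneg_left (pow_le_pow_left₀ (norm_nonneg y) hy' _)
            (Nat.cast_nonneg n)
      _ = (n:ℝ) * r ^ (n-1) := one_mul _
  have heq : mpl (k0 :: ks) =ᶠ[nhds z] fun y => ∑' n : ℕ, c n * y ^ n := by
    filter_upwards [Metric.isOpen_ball.mem_nhds (mem_ball_zero_iff.2 hz)] with y hy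
    exact mpl_eq (k0 :: ks) hkk y (mem_ball_zero_iff.1 hy)
  have hd2 : HasDerivAt (mpl (k0 :: ks)) D z := hderiv.congr_of_eventuallyEq heq
  refine ⟨hd2.differentiableAt, fun h2 hz0 => ?_, fun h1 => ?_⟩
  · rw [hd2.deriv, hD]
    have hterm : ∀ n : ℕ, c n * ((n:ℂ) * z ^ (n-1))
        = z⁻¹ * (((bcoef ((k0-1) :: ks) n : ℝ) : ℂ) * z ^ n) := by
      intro n
      rcases Nat.eq_zero_or_pos n with rfl | hn
      · simp [hc, bcoef]
      · have hb : ((n:ℕ) : ℂ) * ((bcoef (k0 :: ks) n : ℝ) : ℂ)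
            = ((bcoef ((k0-1) :: ks) n : ℝ) : ℂ) := by
          rw [← bcoef_mul_nat k0 hk0 ks n]
          push_cast
          ring
        have hzp : z ^ n = z ^ (n-1) * z := by
          rw [← pow_succ]
          congr 1
          omega
        rw [hc]
        dsimp only
        rw [hzp, ← hb]
        field_simp
    rw [tsum_congr hterm, tsum_mul_left, ← mpl_eq ((k0-1) :: ks) ?_ z hz]
    intro x hx
    rcases List.mem_cons.1 hx with rfl | hx
    · omega
    · exact hks x hx
  · subst h1
    rw [hd2.deriv, hD]
    have hterm : ∀ n : ℕ, c n * ((n:ℂ) * z ^ (n-1))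
        = ((bcoef (0 :: ks) n : ℝ) : ℂ) * z ^ (n-1) := by
      intro n
      rw [hc]
      dsimp only
      rw [← mul_assoc, mul_comm ((bcoef (1 :: ks) n : ℝ) : ℂ) ((n:ℕ) : ℂ)]
      congr 1
      rw [← bcoef_mul_nat 1 le_rfl ks n]
      push_cast
      ring
    rw [tsum_congr hterm]
    have hsum : Summable (fun n : ℕ => ((bcoef (0 :: ks) n : ℝ) : ℂ) * z ^ (n-1)) := by
      apply Summable.of_norm
      apply (summable_u (norm_nonneg z) hz).of_nonneg_of_le (fun n => norm_nonneg _)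
      intro n
      rw [norm_mul, norm_pow, Complex.norm_real, Real.norm_eq_abs,
        abs_of_nonneg (bcoef_nonneg _ n)]
      exact mul_le_mul_of_nonneg_right (bcoef_zero_cons_le ks hks n) (by positivity)
    rw [hsum.tsum_eq_zero_add]
    have h0 : ((bcoef (0 :: ks) 0 : ℝ) : ℂ) * z ^ (0-1) = 0 := by
      simp [bcoef]
    rw [h0, zero_add]
    have hf : Summable (fun n : ℕ => ‖z ^ n‖) := by
      simpa [norm_pow] using summable_geometric_of_lt_one (norm_nonneg z) hz
    have hg : Summable (fun n : ℕ => ‖((bcoef ks n : ℝ) : ℂ) * z ^ n‖) := by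
      apply ((summable_bz ks hks (norm_nonneg z) hz)).of_nonneg_of_le
        (fun n => norm_nonneg _)
      intro n
      rw [norm_mul, norm_pow, Complex.norm_real, Real.norm_eq_abs,
        abs_of_nonneg (bcoef_nonneg _ n)]
      exact le_of_eq (mul_comm _ _)
    rw [mpl_eq ks hks z hz, ← tsum_geometric_of_norm_lt_one hz,
      tsum_mul_tsum_eq_tsum_sum_range_of_summable_norm hf hg]
    apply tsum_congr
    intro n
    rw [Nat.add_sub_cancel, bcoef_zero_cons]
    have hin : ∀ i ∈ Finset.range (n+1),
        z ^ i * (((bcoef ks (n - i) : ℝ) : ℂ) * z ^ (n - i))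
          = ((bcoef ks (n - i) : ℝ) : ℂ) * z ^ n := by
      intro i hi
      have : i + (n - i) = n := by
        rw [Finset.mem_range] at hi
        omega
      rw [mul_comm (z ^ i), mul_assoc, ← pow_add]
      congr 2
      omega
    rw [Finset.sum_congr rfl hin, ← Finset.sum_mul]
    congr 1
    push_cast
    have hrefl := Finset.sum_range_reflect (fun j => ((bcoef ks j : ℝ) : ℂ)) (n+1)
    simp only [Nat.add_sub_cancel] at hrefl
    exact hrefl.symm
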